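/- In a graph admitting a hole-cyclic orientation, every avoidable vertex is bisimplicial. -/
import Mathlib


open SimpleGraph

/-- A walk `c` from `v` to `v` is an induced (chordless) cycle if it is a cycle and
every edge of the graph between vertices of the cycle is an edge of the cycle. -/
def IsInducedCycle {V : Type*} (G : SimpleGraph V) {v : V} (c : G.Walk v v) : Prop :=
  c.IsCycle ∧ ∀ x ∈ c.support, ∀ y ∈ c.support, G.Adj x y → s(x, y) ∈ c.edges

/-- A vertex `v` is avoidable if every induced path `x - v - y` on three vertices
closes to an induced cycle. -/
def Avoidable {V : Type*} (G : SimpleGraph V) (v : V) : Prop :=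
  ∀ x y : V, G.Adj v x → G.Adj v y → x ≠ y → ¬ G.Adj x y →
    ∃ c : G.Walk v v, IsInducedCycle G c ∧ s(x, v) ∈ c.edges ∧ s(v, y) ∈ c.edges

/-- A vertex is bisimplicial if its neighborhood is the union of two cliques. -/
def Bisimplicial {V : Type*} (G : SimpleGraph V) (v : V) : Prop :=
  ∃ A B : Set V, G.neighborSet v = A ∪ B ∧ G.IsClique A ∧ G.IsClique B

/-- An orientation `D` of `G` is hole-cyclic if every induced cycle of length at least
four is oriented cyclically. -/
def HoleCyclicOrientation {V : Type*} (G : SimpleGraph V) (D : V → V → Prop) : Prop :=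
  (∀ u v : V, G.Adj u v ↔ (D u v ∨ D v u)) ∧ (∀ u v : V, D u v → ¬ D v u) ∧
    ∀ (v : V) (c : G.Walk v v), IsInducedCycle G c → 4 ≤ c.length →
      (∀ d ∈ c.darts, D d.fst d.snd) ∨ (∀ d ∈ c.darts, D d.snd d.fst)

section Aux

variable {V : Type*} {G : SimpleGraph V}

/-- In a cycle, darts are determined by their second vertex. -/
lemma aux_dart_snd_inj {v : V} {c : G.Walk v v} (hc : c.IsCycle)
    {d₁ d₂ : G.Dart} (h₁ : d₁ ∈ c.darts) (h₂ : d₂ ∈ c.darts) (h : d₁.snd = d₂.snd) :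
    d₁ = d₂ := by
  have hnd : (c.darts.map (·.snd)).Nodup := by
    rw [SimpleGraph.Walk.map_snd_darts]; exact hc.support_nodup
  exact List.inj_on_of_nodup_map hnd h₁ h₂ h

/-- In a cycle, the initial segment `support.dropLast` has no duplicates. -/
lemma aux_dropLast_nodup {v : V} {c : G.Walk v v} (hc : c.IsCycle) :
    c.support.dropLast.Nodup := by
  have h3 := hc.three_le_length
  have htne : c.support.tail ≠ [] := by
    have hlt : c.support.tail.length = c.length := by
      simp [List.length_tail, SimpleGraph.Walk.length_support]
    intro hn
    rw [hn] at hlt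
    simp at hlt
    omega
  have hlast : c.support.tail.getLast htne = v := by
    rw [List.getLast_tail]
    exact c.getLast_support
  have heq : c.support.tail.dropLast ++ [v] = c.support.tail := by
    conv_rhs => rw [← List.dropLast_append_getLast htne]
    rw [hlast]
  have htnd : c.support.tail.Nodup := hc.support_nodup
  have hvnot : v ∉ c.support.tail.dropLast := by
    rw [← heq] at htnd
    have hdisj := List.disjoint_of_nodup_append htnd
    intro hmem
    exact hdisj hmem (by simp)
  have hdnd : c.support.tail.dropLast.Nodup := by
    rw [← heq] at htnd
    exact (List.nodup_append.mp htnd).1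
  have hsup : c.support.dropLast = v :: c.support.tail.dropLast := by
    rw [c.support_eq_cons]
    cases hh : c.support.tail with
    | nil => exact absurd hh htne
    | cons a l => simp [List.dropLast_cons₂]
  rw [hsup]
  exact List.nodup_cons.mpr ⟨hvnot, hdnd⟩

/-- In a cycle, darts are determined by their first vertex. -/
lemma aux_dart_fst_inj {v : V} {c : G.Walk v v} (hc : c.IsCycle)
    {d₁ d₂ : G.Dart} (h₁ : d₁ ∈ c.darts) (h₂ : d₂ ∈ c.darts) (h : d₁.fst = d₂.fst) :
    d₁ = d₂ := by
  have hnd : (c.darts.map (·.fst)).Nodup := by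
    rw [SimpleGraph.Walk.map_fst_darts]; exact aux_dropLast_nodup hc
  exact List.inj_on_of_nodup_map hnd h₁ h₂ h

/-- Key lemma: in a consistently oriented cycle, two distinct neighbors of `v` on the
cycle cannot both point to `v`. -/
lemma aux_key {D : V → V → Prop} (hasym : ∀ u w : V, D u w → ¬ D w u)
    {v x y : V} {c : G.Walk v v} (hc : c.IsCycle) (hxy : x ≠ y)
    (hx : s(x, v) ∈ c.edges) (hy : s(y, v) ∈ c.edges)
    (hdir : (∀ d ∈ c.darts, D d.fst d.snd) ∨ (∀ d ∈ c.darts, D d.snd d.fst))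
    (hDx : D x v) (hDy : D y v) : False := by
  rw [SimpleGraph.Walk.edges, List.mem_map] at hx hy
  obtain ⟨d₁, hd₁, he₁⟩ := hx
  obtain ⟨d₂, hd₂, he₂⟩ := hy
  have h₁ : (d₁.fst = x ∧ d₁.snd = v) ∨ (d₁.fst = v ∧ d₁.snd = x) := by
    have hs : s(d₁.fst, d₁.snd) = s(x, v) := he₁
    rw [Sym2.eq_iff] at hs; tauto
  have h₂ : (d₂.fst = y ∧ d₂.snd = v) ∨ (d₂.fst = v ∧ d₂.snd = y) := by
    have hs : s(d₂.fst, d₂.snd) = s(y, v) := he₂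
    rw [Sym2.eq_iff] at hs; tauto
  rcases hdir with hdir | hdir
  · have e₁ : d₁.fst = x ∧ d₁.snd = v := by
      rcases h₁ with h | ⟨ha, hb⟩
      · exact h
      · exact absurd hDx (by have hd := hdir d₁ hd₁; rw [ha, hb] at hd; exact hasym v x hd)
    have e₂ : d₂.fst = y ∧ d₂.snd = v := by
      rcases h₂ with h | ⟨ha, hb⟩
      · exact h
      · exact absurd hDy (by have hd := hdir d₂ hd₂; rw [ha, hb] at hd; exact hasym v y hd)
    have hdd : d₁ = d₂ := aux_dart_snd_inj hc hd₁ hd₂ (by rw [e₁.2, e₂.2])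
    exact hxy (by rw [← e₁.1, ← e₂.1, hdd])
  · have e₁ : d₁.fst = v ∧ d₁.snd = x := by
      rcases h₁ with ⟨ha, hb⟩ | h
      · exact absurd hDx (by have hd := hdir d₁ hd₁; rw [ha, hb] at hd; exact hasym v x hd)
      · exact h
    have e₂ : d₂.fst = v ∧ d₂.snd = y := by
      rcases h₂ with ⟨ha, hb⟩ | h
      · exact absurd hDy (by have hd := hdir d₂ hd₂; rw [ha, hb] at hd; exact hasym v y hd)
      · exact h
    have hdd : d₁ = d₂ := aux_dart_fst_inj hc hd₁ hd₂ (by rw [e₁.1, e₂.1])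
    exact hxy (by rw [← e₁.2, ← e₂.2, hdd])

/-- The cycle produced by avoidability has length at least 4. -/
lemma aux_len4 {v x y : V} {c : G.Walk v v} (hc : c.IsCycle)
    (hxv : x ≠ v) (hyv : y ≠ v) (hxy : x ≠ y) (hnadj : ¬ G.Adj x y)
    (hx : s(x, v) ∈ c.edges) (hy : s(v, y) ∈ c.edges) : 4 ≤ c.length := by
  have h3 := hc.three_le_length
  by_contra hlt
  have hlen : c.length = 3 := by omega
  cases c with
  | nil => simp at hlen
  | cons h₁ p =>
    cases p with
    | nil => simp at hlen
    | cons h₂ q =>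
      cases q with
      | nil => simp at hlen
      | cons h₃ r =>
        cases r with
        | nil =>
          simp only [SimpleGraph.Walk.edges_cons, SimpleGraph.Walk.edges_nil,
            List.mem_cons, List.not_mem_nil, or_false, Sym2.eq_iff] at hx hy
          rename_i a b
          have hxab : x = a ∨ x = b := by
            rcases hx with h | h | h <;> tauto
          have hyab : y = a ∨ y = b := by
            rcases hy with h | h | h <;> tauto
          rcases hxab with rfl | rfl <;> rcases hyab with rfl | rfl
          · exact hxy rfl
          · exact hnadj h₂
          · exact hnadj h₂.symm
          · exact hxy rfl
        | cons h₄ s => simp [SimpleGraph.Walk.length_cons] at hlen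

end Aux

/-- In a graph admitting a hole-cyclic orientation, every avoidable vertex is
bisimplicial. -/
theorem stmt_11 {V : Type*} (G : SimpleGraph V)
    (h : ∃ D : V → V → Prop, HoleCyclicOrientation G D)
    (v : V) (hv : Avoidable G v) : Bisimplicial G v := by
  obtain ⟨D, hori, hasym, hcyc⟩ := h
  refine ⟨{x | G.Adj v x ∧ D x v}, {x | G.Adj v x ∧ D v x}, ?_, ?_, ?_⟩
  · ext x
    simp only [mem_neighborSet, Set.mem_union, Set.mem_setOf_eq]
    constructor
    · intro hadj
      rcases (hori v x).mp hadj with hd | hd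
      · exact Or.inr ⟨hadj, hd⟩
      · exact Or.inl ⟨hadj, hd⟩
    · rintro (⟨hadj, _⟩ | ⟨hadj, _⟩) <;> exact hadj
  · rintro x ⟨hxadj, hxD⟩ y ⟨hyadj, hyD⟩ hxy
    by_contra hnadj
    obtain ⟨c, ⟨hcyc', hind⟩, hx, hy⟩ := hv x y hxadj hyadj hxy hnadj
    have h4 : 4 ≤ c.length :=
      aux_len4 hcyc' (G.ne_of_adj hxadj).symm (G.ne_of_adj hyadj).symm hxy hnadj hx hy
    have hdir := hcyc v c ⟨hcyc', hind⟩ h4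
    exact aux_key hasym hcyc' hxy hx (by rwa [Sym2.eq_swap] at hy) hdir hxD hyD
  · rintro x ⟨hxadj, hxD⟩ y ⟨hyadj, hyD⟩ hxy
    by_contra hnadj
    obtain ⟨c, ⟨hcyc', hind⟩, hx, hy⟩ := hv x y hxadj hyadj hxy hnadj
    have h4 : 4 ≤ c.length :=
      aux_len4 hcyc' (G.ne_of_adj hxadj).symm (G.ne_of_adj hyadj).symm hxy hnadj hx hy
    have hdir := hcyc v c ⟨hcyc', hind⟩ h4
    exact aux_key (D := fun a b => D b a) (fun a b hab hba => hasym b a hab hba)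
      hcyc' hxy hx (by rwa [Sym2.eq_swap] at hy) hdir.symm hxD hyD
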